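/- (Identifiability of the spherical Normal-Block model with observed clusters.) Let n, p, q, d ≥ 1, let c : Fin p → Fin q be surjective with some cluster containing at least two elements, and let C be the associated p×q clustering matrix. Let X be an n×d real matrix of rank d, let ξ, ξ' > 0, let Σ, Σ' be symmetric positive semidefinite q×q real matrices, and let B, B' be d×p real matrices. If for every i ∈ Fin n and every y ∈ ℝ^p the Gaussian density with mean Bᵀ X_i and covariance ξ·I_p + C Σ Cᵀ evaluated at y equals the Gaussian density with mean B'ᵀ X_i and covariance ξ'·I_p + C Σ' Cᵀ evaluated at y (where X_i denotes the i-th row of X, viewed as a vector in ℝ^d), then B = B', ξ = ξ' and Σ = Σ'. -/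

import Mathlib

open Matrix

/-- The clustering matrix associated with a clustering `c` of `p` variables into
`q` clusters: `C j k = 1` if `c j = k` and `0` otherwise. -/
def clusterMatrix {p q : ℕ} (c : Fin p → Fin q) : Matrix (Fin p) (Fin q) ℝ :=
  Matrix.of fun j k => if c j = k then 1 else 0

/-- Gaussian density with mean `m` and covariance `S`. -/
noncomputable def gaussDensity {p : ℕ} (m : Fin p → ℝ) (S : Matrix (Fin p) (Fin p) ℝ)
    (y : Fin p → ℝ) : ℝ :=
  (Real.sqrt ((2 * Real.pi) ^ p * S.det))⁻¹ *
    Real.exp (-(1 / 2) * ((y - m) ⬝ᵥ (S⁻¹ *ᵥ (y - m))))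

lemma quadZero {p : ℕ} (Q : Matrix (Fin p) (Fin p) ℝ) (hsym : Qᵀ = Q)
    (h : ∀ y : Fin p → ℝ, y ⬝ᵥ (Q *ᵥ y) = 0) : Q = 0 := by
  have hdiag : ∀ i, Q i i = 0 := by
    intro i
    have := h (Pi.single i 1)
    simpa [dotProduct, mulVec, Pi.single_apply] using this
  ext i j
  have hQji : Q j i = Q i j := by
    have := congrFun (congrFun hsym i) j
    simpa using this
  have := h (Pi.single i 1 + Pi.single j 1)
  rcases eq_or_ne i j with rfl | hij
  · simpa using hdiag i
  · simp [dotProduct, mulVec, Pi.single_apply, Finset.sum_add_distrib, add_mul, mul_add,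
      Finset.sum_ite_eq, Finset.sum_ite_eq', hij, hij.symm] at this
    simp only [Matrix.zero_apply]
    rw [hdiag, hdiag] at this
    linarith [this, hQji]

lemma vecZero {p : ℕ} (w : Fin p → ℝ) (h : ∀ y : Fin p → ℝ, y ⬝ᵥ w = 0) : w = 0 := by
  ext i
  simpa using h (Pi.single i 1)

lemma dotsym {p : ℕ} {A : Matrix (Fin p) (Fin p) ℝ} (hsym : Aᵀ = A) (x y : Fin p → ℝ) :
    x ⬝ᵥ (A *ᵥ y) = y ⬝ᵥ (A *ᵥ x) := by
  rw [dotProduct_mulVec, ← mulVec_transpose, hsym, dotProduct_comm]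

lemma expand {p : ℕ} {A : Matrix (Fin p) (Fin p) ℝ} (hsym : Aᵀ = A) (y m : Fin p → ℝ) :
    (y - m) ⬝ᵥ (A *ᵥ (y - m))
      = y ⬝ᵥ (A *ᵥ y) - 2 * (y ⬝ᵥ (A *ᵥ m)) + m ⬝ᵥ (A *ᵥ m) := by
  have hs := dotsym hsym m y
  simp only [mulVec_sub, dotProduct_sub, sub_dotProduct]
  linarith

lemma gaussEq {p : ℕ} (m m' : Fin p → ℝ) (S S' : Matrix (Fin p) (Fin p) ℝ)
    (hS : S.PosDef) (hS' : S'.PosDef)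
    (h : ∀ y, gaussDensity m S y = gaussDensity m' S' y) : m = m' ∧ S = S' := by
  have hsymS : Sᵀ = S := by
    have := hS.isHermitian
    rwa [IsHermitian, conjTranspose_eq_transpose_of_trivial] at this
  have hsymS' : S'ᵀ = S' := by
    have := hS'.isHermitian
    rwa [IsHermitian, conjTranspose_eq_transpose_of_trivial] at this
  set A := S⁻¹ with hAdef
  set A' := S'⁻¹ with hA'def
  have hA : A.PosDef := hS.inv
  have hA' : A'.PosDef := hS'.inv
  have hsymA : Aᵀ = A := by rw [hAdef, transpose_nonsing_inv, hsymS]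
  have hsymA' : A'ᵀ = A' := by rw [hA'def, transpose_nonsing_inv, hsymS']
  have hα : 0 < Real.sqrt ((2 * Real.pi) ^ p * S.det) := by
    exact Real.sqrt_pos.2 (mul_pos (pow_pos (by positivity) p) hS.det_pos)
  have hβ : 0 < Real.sqrt ((2 * Real.pi) ^ p * S'.det) := by
    exact Real.sqrt_pos.2 (mul_pos (pow_pos (by positivity) p) hS'.det_pos)
  have hconst : ∀ y, (y - m) ⬝ᵥ (A *ᵥ (y - m)) - (y - m') ⬝ᵥ (A' *ᵥ (y - m'))
      = 2 * (Real.log (Real.sqrt ((2 * Real.pi) ^ p * S'.det))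
          - Real.log (Real.sqrt ((2 * Real.pi) ^ p * S.det))) := by
    intro y
    have hy := h y
    unfold gaussDensity at hy
    have := congrArg Real.log hy
    rw [Real.log_mul (by positivity) (Real.exp_ne_zero _),
        Real.log_mul (by positivity) (Real.exp_ne_zero _),
        Real.log_exp, Real.log_exp, Real.log_inv, Real.log_inv] at this
    linarith
  have hkey : ∀ y : Fin p → ℝ,
      (y ⬝ᵥ (A *ᵥ y) - y ⬝ᵥ (A' *ᵥ y)) - 2 * (y ⬝ᵥ (A *ᵥ m) - y ⬝ᵥ (A' *ᵥ m'))
        = 2 * (Real.log (Real.sqrt ((2 * Real.pi) ^ p * S'.det))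
          - Real.log (Real.sqrt ((2 * Real.pi) ^ p * S.det)))
          - (m ⬝ᵥ (A *ᵥ m) - m' ⬝ᵥ (A' *ᵥ m')) := by
    intro y
    have := hconst y
    rw [expand hsymA, expand hsymA'] at this
    linarith
  have heven : ∀ y : Fin p → ℝ, (-y) ⬝ᵥ (A *ᵥ (-y)) = y ⬝ᵥ (A *ᵥ y) := by
    intro y; simp [mulVec_neg]
  have heven' : ∀ y : Fin p → ℝ, (-y) ⬝ᵥ (A' *ᵥ (-y)) = y ⬝ᵥ (A' *ᵥ y) := by
    intro y; simp [mulVec_neg]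
  have hlin : ∀ y : Fin p → ℝ, y ⬝ᵥ (A *ᵥ m - A' *ᵥ m') = 0 := by
    intro y
    have h1 := hkey y
    have h2 := hkey (-y)
    rw [heven y, heven' y] at h2
    simp only [neg_dotProduct] at h2
    rw [dotProduct_sub]
    linarith
  have hAm : A *ᵥ m = A' *ᵥ m' := sub_eq_zero.1 (vecZero _ hlin)
  have hquad : ∀ y : Fin p → ℝ, y ⬝ᵥ ((A - A') *ᵥ y) = 0 := by
    intro y
    have h1 := hkey y
    have h0 := hkey 0
    simp only [zero_dotProduct, mul_zero, sub_zero, mul_sub] at h0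
    have hl := hlin y
    rw [dotProduct_sub] at hl
    rw [sub_mulVec, dotProduct_sub]
    linarith
  have hAA : A = A' := by
    have hsub : (A - A')ᵀ = A - A' := by rw [transpose_sub, hsymA, hsymA']
    exact sub_eq_zero.1 (quadZero _ hsub hquad)
  have hmm : m = m' := by
    have hinj : Function.Injective (A.mulVec) :=
      (Matrix.mulVec_injective_iff_isUnit).2 hA.isUnit
    apply hinj
    rw [hAm, hAA]
  refine ⟨hmm, ?_⟩
  have hinv : S⁻¹ = S'⁻¹ := hAA
  calc S = S⁻¹⁻¹ := (Matrix.nonsing_inv_nonsing_inv S hS.det_pos.ne'.isUnit).symm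
    _ = S'⁻¹⁻¹ := by rw [hinv]
    _ = S' := Matrix.nonsing_inv_nonsing_inv S' hS'.det_pos.ne'.isUnit

lemma clusterEntry {p q : ℕ} (c : Fin p → Fin q) (Sg : Matrix (Fin q) (Fin q) ℝ) (j l : Fin p) :
    (clusterMatrix c * Sg * (clusterMatrix c)ᵀ) j l = Sg (c j) (c l) := by
  simp [clusterMatrix, mul_apply, transpose_apply, ite_mul, mul_ite, Finset.sum_ite_eq,
    Finset.sum_ite_eq']

lemma covPosDef {p q : ℕ} (c : Fin p → Fin q) (ξ : ℝ) (hξ : 0 < ξ)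
    (Sg : Matrix (Fin q) (Fin q) ℝ) (hSg : Sg.PosSemidef) :
    (ξ • (1 : Matrix (Fin p) (Fin p) ℝ) + clusterMatrix c * Sg * (clusterMatrix c)ᵀ).PosDef := by
  have h1 : (ξ • (1 : Matrix (Fin p) (Fin p) ℝ)).PosDef := by
    exact Matrix.PosDef.one.smul hξ
  have h2 : (clusterMatrix c * Sg * (clusterMatrix c)ᵀ).PosSemidef := by
    have := hSg.mul_mul_conjTranspose_same (clusterMatrix c)
    rwa [conjTranspose_eq_transpose_of_trivial] at this
  exact h1.add_posSemidef h2

lemma rankInj {n d : ℕ} (X : Matrix (Fin n) (Fin d) ℝ) (hX : X.rank = d)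
    {v : Fin d → ℝ} (hv : X *ᵥ v = 0) : v = 0 := by
  have hker : LinearMap.ker X.mulVecLin = ⊥ := by
    have h1 := LinearMap.finrank_range_add_finrank_ker X.mulVecLin
    rw [show Module.finrank ℝ (LinearMap.range X.mulVecLin) = d from hX] at h1
    simp only [Module.finrank_pi, Fintype.card_fin] at h1
    have : Module.finrank ℝ (LinearMap.ker X.mulVecLin) = 0 := by omega
    exact Submodule.finrank_eq_zero.1 this
  have : v ∈ LinearMap.ker X.mulVecLin := by
    simpa [Matrix.mulVecLin_apply] using hv
  rw [hker] at this
  simpa using this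

/-- Identifiability of the spherical Normal-Block model with observed clusters. -/
theorem stmt3 {n p q d : ℕ} (hn : 1 ≤ n) (hp : 1 ≤ p) (hq : 1 ≤ q) (hd : 1 ≤ d)
    (c : Fin p → Fin q) (hsurj : Function.Surjective c)
    (htwo : ∃ j l : Fin p, j ≠ l ∧ c j = c l)
    (X : Matrix (Fin n) (Fin d) ℝ) (hX : X.rank = d)
    (ξ ξ' : ℝ) (hξ : 0 < ξ) (hξ' : 0 < ξ')
    (Sg Sg' : Matrix (Fin q) (Fin q) ℝ) (hSg : Sg.PosSemidef) (hSg' : Sg'.PosSemidef)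
    (B B' : Matrix (Fin d) (Fin p) ℝ)
    (h : ∀ (i : Fin n) (y : Fin p → ℝ),
      gaussDensity (Bᵀ *ᵥ (fun k => X i k))
        (ξ • (1 : Matrix (Fin p) (Fin p) ℝ) + clusterMatrix c * Sg * (clusterMatrix c)ᵀ) y
      = gaussDensity (B'ᵀ *ᵥ (fun k => X i k))
        (ξ' • (1 : Matrix (Fin p) (Fin p) ℝ) + clusterMatrix c * Sg' * (clusterMatrix c)ᵀ) y) :
    B = B' ∧ ξ = ξ' ∧ Sg = Sg' := by
  have hSpd := covPosDef c ξ hξ Sg hSg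
  have hS'pd := covPosDef c ξ' hξ' Sg' hSg'
  have hmean : ∀ i : Fin n,
      Bᵀ *ᵥ (fun k => X i k) = B'ᵀ *ᵥ (fun k => X i k)
      ∧ (ξ • (1 : Matrix (Fin p) (Fin p) ℝ) + clusterMatrix c * Sg * (clusterMatrix c)ᵀ)
        = (ξ' • (1 : Matrix (Fin p) (Fin p) ℝ) + clusterMatrix c * Sg' * (clusterMatrix c)ᵀ) :=
    fun i => gaussEq _ _ _ _ hSpd hS'pd (h i)
  have i0 : Fin n := ⟨0, hn⟩
  have hScov := (hmean i0).2
  have hentry : ∀ j l : Fin p,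
      ξ * (if j = l then 1 else 0) + Sg (c j) (c l)
        = ξ' * (if j = l then 1 else 0) + Sg' (c j) (c l) := by
    intro j l
    have := congrFun (congrFun hScov j) l
    simpa [Matrix.add_apply, Matrix.smul_apply, one_apply, clusterEntry, smul_eq_mul] using this
  obtain ⟨j0, l0, hjl, hcc⟩ := htwo
  have hdiagSg : Sg (c l0) (c l0) = Sg' (c l0) (c l0) := by
    have := hentry j0 l0
    rw [hcc] at this
    simpa [hjl] using this
  have hxi : ξ = ξ' := by
    have := hentry l0 l0
    simp at this
    linarith
  have hSgeq : Sg = Sg' := by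
    ext k k'
    obtain ⟨j, rfl⟩ := hsurj k
    obtain ⟨l, rfl⟩ := hsurj k'
    have := hentry j l
    rw [hxi] at this
    linarith
  have hBB : B = B' := by
    have hXv : ∀ j : Fin p, X *ᵥ (fun k => B k j - B' k j) = 0 := by
      intro j
      ext i
      have hm := congrFun ((hmean i).1) j
      simp only [mulVec, dotProduct, transpose_apply] at hm ⊢
      simp only [mul_sub, Finset.sum_sub_distrib, Pi.zero_apply]
      have e1 : ∑ k, X i k * B k j = ∑ k, B k j * X i k := by
        exact Finset.sum_congr rfl fun k _ => mul_comm _ _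
      have e2 : ∑ k, X i k * B' k j = ∑ k, B' k j * X i k := by
        exact Finset.sum_congr rfl fun k _ => mul_comm _ _
      rw [e1, e2, hm, sub_self]
    ext a b
    have := congrFun (rankInj X hX (hXv b)) a
    simpa [sub_eq_zero] using this
  exact ⟨hBB, hxi, hSgeq⟩
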